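/- Let G be a group and M a G-module, and let C^n(G,M) denote inhomogeneous cochains (functions G^n → M) with the standard differential. For s ∈ G, let (sa)(s_1,…,s_n) = s·a(s^{-1}s_1s,…,s^{-1}s_ns), and define h_s: C^{n+1}(G,M) → C^n(G,M) by h_s(a)(s_1,…,s_n) = Σ_{i=0}^n (-1)^i a(s_1,…,s_i, s, s^{-1}s_{i+1}s,…,s^{-1}s_ns). Then sa − a = h_s(da) + d(h_s(a)) for all a ∈ C^n(G,M). -/

import Mathlib

noncomputable section

variable (G : Type) [Group G]

/-- The differential on inhomogeneous cochains. -/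
def dInh {M : Type} [AddCommGroup M] [DistribMulAction G M] (n : ℕ)
    (a : (Fin n → G) → M) : (Fin (n + 1) → G) → M := fun g =>
  g 0 • a (fun j => g j.succ)
    + ∑ i : Fin n, ((-1 : ℤ) ^ ((i : ℕ) + 1)) •
        a (fun j =>
          if (j : ℕ) < (i : ℕ) then g j.castSucc
          else if (j : ℕ) = (i : ℕ) then g j.castSucc * g j.succ
          else g j.succ)
    + ((-1 : ℤ) ^ (n + 1)) • a (fun j => g j.castSucc)

/-- The homotopy `hₛ` on inhomogeneous cochains:
`hₛ(a)(s₁,…,sₙ) = Σ (-1)ⁱ a(s₁,…,sᵢ,s,s⁻¹sᵢ₊₁s,…,s⁻¹sₙs)`. -/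
def hInh {M : Type} [AddCommGroup M] (s : G) (n : ℕ)
    (a : (Fin (n + 1) → G) → M) : (Fin n → G) → M := fun g =>
  ∑ i : Fin (n + 1), ((-1 : ℤ) ^ (i : ℕ)) •
    a (fun j =>
      if _h1 : (j : ℕ) < (i : ℕ) then g ⟨(j : ℕ), by have := i.isLt; omega⟩
      else if _h2 : (j : ℕ) = (i : ℕ) then s
      else s⁻¹ * g ⟨(j : ℕ) - 1, by have := j.isLt; omega⟩ * s)

/-- The action of `s ∈ G` on inhomogeneous cochains:
`(sa)(s₁,…,sₙ) = s • a(s⁻¹s₁s,…,s⁻¹sₙs)`. -/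
def sInh {M : Type} [AddCommGroup M] [DistribMulAction G M] (s : G) (n : ℕ)
    (a : (Fin n → G) → M) : (Fin n → G) → M := fun g =>
  s • a fun j => s⁻¹ * g j * s

namespace St10

variable {G}

def seq {n : ℕ} (g : Fin n → G) : ℕ → G := fun x => if h : x < n then g ⟨x, h⟩ else 1

@[simp] lemma seq_lt {n : ℕ} (g : Fin n → G) (x : ℕ) (h : x < n) : seq g x = g ⟨x, h⟩ :=
  dif_pos h

def insN (s : G) {m : ℕ} (g : Fin m → G) (i : ℕ) : Fin (m + 1) → G := fun j =>
  if (j : ℕ) < i then seq g (j : ℕ)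
  else if (j : ℕ) = i then s
  else s⁻¹ * seq g ((j : ℕ) - 1) * s

def fmidN (k : ℕ) {m : ℕ} (c : Fin (m + 1) → G) : Fin m → G := fun j =>
  if (j : ℕ) < k then c j.castSucc
  else if (j : ℕ) = k then c j.castSucc * c j.succ
  else c j.succ

def fd0 {m : ℕ} (c : Fin (m + 1) → G) : Fin m → G := fun j => c j.succ

def flast {m : ℕ} (c : Fin (m + 1) → G) : Fin m → G := fun j => c j.castSucc

def BN (s : G) {n : ℕ} (g : Fin (n + 1) → G) (i : ℕ) : Fin (n + 1) → G := fun j =>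
  if (j : ℕ) < i then seq g (j : ℕ)
  else if (j : ℕ) = i then seq g (j : ℕ) * s
  else s⁻¹ * seq g (j : ℕ) * s

variable {n : ℕ} (s : G) (g : Fin (n + 1) → G)

lemma seq_fd0 (x : ℕ) : seq (fd0 g) x = if x < n then seq g (x + 1) else 1 := by
  unfold seq fd0
  split_ifs with h h2
  · simp [Fin.succ_mk]
  · omega
  · rfl

lemma seq_flast (x : ℕ) : seq (flast g) x = if x < n then seq g x else 1 := by
  unfold seq flast
  split_ifs with h h2
  · simp [Fin.castSucc_mk]
  · omega
  · rfl

lemma seq_fmid (k x : ℕ) : seq (fmidN k g) x =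
    if x < n then
      (if x < k then seq g x else if x = k then seq g x * seq g (x + 1) else seq g (x + 1))
    else 1 := by
  unfold seq fmidN
  split_ifs with h h1 h1' h2 h2' h3 <;>
    simp_all [Fin.castSucc_mk, Fin.succ_mk, seq] <;> omega

lemma L0a : fd0 (insN s g 0) = fun j => s⁻¹ * g j * s := by
  funext j
  simp only [fd0, insN, Fin.val_succ]
  split_ifs with h1 h2
  · omega
  · contradiction
  · simp only [Nat.add_sub_cancel]
    rw [seq_lt g _ j.isLt, Fin.eta]

lemma L0b : insN s g 0 0 = s := rfl

lemma L1a (i : ℕ) (hi : i ≤ n) : fd0 (insN s g (i + 1)) = insN s (fd0 g) i := by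
  funext j
  simp only [fd0, insN, Fin.val_succ, seq_fd0]
  split_ifs <;>
    first
      | contradiction
      | omega
      | rfl
      | (congr 1 <;> omega)
      | (simp only [show ((j : ℕ) - 1 + 1) = (j : ℕ) from by omega, Nat.add_sub_cancel] <;> group)
      | (simp only [Nat.add_sub_cancel]; group)

lemma L1b (i : ℕ) : insN s g (i + 1) 0 = g 0 := by
  simp only [insN]
  norm_num [seq]

lemma Llast (i : ℕ) (hi : i ≤ n) : flast (insN s g i) = insN s (flast g) i := by
  funext j
  simp only [flast, insN, Fin.coe_castSucc, seq_flast]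
  split_ifs <;>
    first
      | contradiction
      | omega
      | rfl
      | (congr 1 <;> omega)
      | (simp only [show ((j : ℕ) - 1 + 1) = (j : ℕ) from by omega, Nat.add_sub_cancel]; group)
      | (simp only [Nat.add_sub_cancel]; group)

lemma LlastTop : flast (insN s g (n + 1)) = g := by
  funext j
  simp only [flast, insN, Fin.coe_castSucc]
  split_ifs with h1 h2
  · rw [seq_lt g _ j.isLt, Fin.eta]
  · omega
  · omega

set_option maxHeartbeats 1000000 in
lemma Lfar (k i : ℕ) (hk : k + 1 < i) (hi : i ≤ n + 1) :
    fmidN k (insN s g i) = insN s (fmidN k g) (i - 1) := by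
  funext j
  simp only [fmidN, insN, Fin.coe_castSucc, Fin.val_succ, seq_fmid]
  split_ifs <;>
    first
      | contradiction
      | omega
      | rfl
      | (congr 1 <;> omega)
      | (simp only [show ((j : ℕ) - 1 + 1) = (j : ℕ) from by omega, Nat.add_sub_cancel] <;> group)
      | (simp only [Nat.add_sub_cancel]; group)

lemma Lnear (k i : ℕ) (hik : i < k) (hk : k ≤ n) :
    fmidN k (insN s g i) = insN s (fmidN (k - 1) g) i := by
  funext j
  simp only [fmidN, insN, Fin.coe_castSucc, Fin.val_succ, seq_fmid]
  split_ifs <;>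
    first
      | contradiction
      | omega
      | rfl
      | (congr 1 <;> omega)
      | (simp only [show ((j : ℕ) - 1 + 1) = (j : ℕ) from by omega, Nat.add_sub_cancel] <;> group)
      | (simp only [Nat.add_sub_cancel]; group)

lemma Leq1 (k : ℕ) (hk : k ≤ n) : fmidN k (insN s g (k + 1)) = BN s g k := by
  funext j
  simp only [fmidN, insN, BN, Fin.coe_castSucc, Fin.val_succ]
  split_ifs <;>
    first
      | contradiction
      | omega
      | rfl
      | (congr 1 <;> omega)
      | (simp only [show ((j : ℕ) - 1 + 1) = (j : ℕ) from by omega, Nat.add_sub_cancel]; group)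
      | (simp only [Nat.add_sub_cancel]; group)

lemma Leq2 (k : ℕ) (hk : k ≤ n) : fmidN k (insN s g k) = BN s g k := by
  funext j
  simp only [fmidN, insN, BN, Fin.coe_castSucc, Fin.val_succ]
  split_ifs <;>
    first
      | contradiction
      | omega
      | rfl
      | (congr 1 <;> omega)
      | (simp only [show ((j : ℕ) - 1 + 1) = (j : ℕ) from by omega, Nat.add_sub_cancel]; group)
      | (simp only [Nat.add_sub_cancel]; group)

lemma negpow_congr {p q : ℕ} (h : p % 2 = q % 2) : ((-1 : ℤ)) ^ p = (-1) ^ q := by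
  conv_lhs => rw [← Nat.div_add_mod p 2]
  conv_rhs => rw [← Nat.div_add_mod q 2]
  rw [pow_add, pow_add, pow_mul, pow_mul, h]
  norm_num

variable {M : Type} [AddCommGroup M] [DistribMulAction G M]

lemma gz (x : G) (z : ℤ) (m : M) : x • (z • m) = z • (x • m) :=
  (DistribMulAction.toAddMonoidHom M x).map_zsmul z m

variable (a : (Fin (n + 1) → G) → M)

lemma P1 :
    (∑ i ∈ Finset.range (n + 2), (-1 : ℤ) ^ i •
        (insN s g i 0 • a (fd0 (insN s g i))))
      + g 0 • ∑ i ∈ Finset.range (n + 1), (-1 : ℤ) ^ i • a (insN s (fd0 g) i)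
      = s • a (fun j => s⁻¹ * g j * s) := by
  rw [Finset.sum_range_succ', Finset.smul_sum, L0a, L0b]
  have key : ∀ i ∈ Finset.range (n + 1),
      (-1 : ℤ) ^ (i + 1) • (insN s g (i + 1) 0 • a (fd0 (insN s g (i + 1))))
        + g 0 • ((-1 : ℤ) ^ i • a (insN s (fd0 g) i)) = 0 := by
    intro i hi
    rw [Finset.mem_range] at hi
    rw [L1a s g i (by omega), L1b, gz, pow_succ, mul_smul, neg_one_zsmul, smul_neg,
      neg_add_cancel]
  calc (∑ i ∈ Finset.range (n + 1),
          (-1 : ℤ) ^ (i + 1) • (insN s g (i + 1) 0 • a (fd0 (insN s g (i + 1)))))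
        + (-1 : ℤ) ^ 0 • (s • a fun j => s⁻¹ * g j * s)
        + ∑ i ∈ Finset.range (n + 1), g 0 • ((-1 : ℤ) ^ i • a (insN s (fd0 g) i))
      = (∑ i ∈ Finset.range (n + 1),
          ((-1 : ℤ) ^ (i + 1) • (insN s g (i + 1) 0 • a (fd0 (insN s g (i + 1))))
            + g 0 • ((-1 : ℤ) ^ i • a (insN s (fd0 g) i))))
        + (-1 : ℤ) ^ 0 • (s • a fun j => s⁻¹ * g j * s) := by
        rw [Finset.sum_add_distrib]; abel
    _ = s • a (fun j => s⁻¹ * g j * s) := by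
        rw [Finset.sum_congr rfl key, Finset.sum_const_zero, zero_add, pow_zero, one_smul]

lemma P3 :
    (∑ i ∈ Finset.range (n + 2), (-1 : ℤ) ^ i •
        ((-1 : ℤ) ^ (n + 1 + 1) • a (flast (insN s g i))))
      + (-1 : ℤ) ^ (n + 1) • ∑ i ∈ Finset.range (n + 1), (-1 : ℤ) ^ i • a (insN s (flast g) i)
      = - a g := by
  rw [Finset.sum_range_succ, Finset.smul_sum, LlastTop]
  have key : ∀ i ∈ Finset.range (n + 1),
      (-1 : ℤ) ^ i • ((-1 : ℤ) ^ (n + 1 + 1) • a (flast (insN s g i)))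
        + (-1 : ℤ) ^ (n + 1) • ((-1 : ℤ) ^ i • a (insN s (flast g) i)) = 0 := by
    intro i hi
    rw [Finset.mem_range] at hi
    rw [Llast s g i (by omega), smul_smul, smul_smul, ← pow_add, ← pow_add, ← add_smul]
    convert zero_smul ℤ _
    rw [show i + (n + 1 + 1) = ((n + 1) + i) + 1 from by ring, pow_succ]
    ring
  have hlast : (-1 : ℤ) ^ (n + 1) • ((-1 : ℤ) ^ (n + 1 + 1) • a g) = - a g := by
    rw [smul_smul, ← pow_add, show (n + 1) + (n + 1 + 1) = 2 * (n + 1) + 1 from by ring,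
      pow_succ, pow_mul]
    norm_num
  calc (∑ i ∈ Finset.range (n + 1),
          (-1 : ℤ) ^ i • ((-1 : ℤ) ^ (n + 1 + 1) • a (flast (insN s g i))))
        + (-1 : ℤ) ^ (n + 1) • ((-1 : ℤ) ^ (n + 1 + 1) • a g)
        + ∑ i ∈ Finset.range (n + 1),
            (-1 : ℤ) ^ (n + 1) • ((-1 : ℤ) ^ i • a (insN s (flast g) i))
      = (∑ i ∈ Finset.range (n + 1),
          ((-1 : ℤ) ^ i • ((-1 : ℤ) ^ (n + 1 + 1) • a (flast (insN s g i)))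
            + (-1 : ℤ) ^ (n + 1) • ((-1 : ℤ) ^ i • a (insN s (flast g) i))))
        + (-1 : ℤ) ^ (n + 1) • ((-1 : ℤ) ^ (n + 1 + 1) • a g) := by
        rw [Finset.sum_add_distrib]; abel
    _ = - a g := by
        rw [Finset.sum_congr rfl key, Finset.sum_const_zero, zero_add, hlast]

lemma P2 :
    (∑ i ∈ Finset.range (n + 2), (-1 : ℤ) ^ i •
        ∑ k ∈ Finset.range (n + 1), (-1 : ℤ) ^ (k + 1) • a (fmidN k (insN s g i)))
      + ∑ k ∈ Finset.range n, (-1 : ℤ) ^ (k + 1) •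
          ∑ i ∈ Finset.range (n + 1), (-1 : ℤ) ^ i • a (insN s (fmidN k g) i)
      = 0 := by
  -- abbreviations
  have h2 : (∑ k ∈ Finset.range n, (-1 : ℤ) ^ (k + 1) •
        ∑ i ∈ Finset.range (n + 1), (-1 : ℤ) ^ i • a (insN s (fmidN k g) i))
      = - ∑ k ∈ Finset.range n, ∑ i ∈ Finset.range (n + 1),
            (-1 : ℤ) ^ (i + k) • a (insN s (fmidN k g) i) := by
    rw [← Finset.sum_neg_distrib]
    refine Finset.sum_congr rfl fun k _ => ?_
    rw [Finset.smul_sum, ← Finset.sum_neg_distrib]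
    refine Finset.sum_congr rfl fun i _ => ?_
    rw [smul_smul, ← pow_add, ← neg_smul]
    congr 1
    rw [show k + 1 + i = (i + k) + 1 from by ring, pow_succ]
    ring
  rw [h2, add_neg_eq_zero]
  calc (∑ i ∈ Finset.range (n + 2), (-1 : ℤ) ^ i •
        ∑ k ∈ Finset.range (n + 1), (-1 : ℤ) ^ (k + 1) • a (fmidN k (insN s g i)))
      = ∑ i ∈ Finset.range (n + 2), ∑ k ∈ Finset.range (n + 1),
          (-1 : ℤ) ^ (i + (k + 1)) • a (fmidN k (insN s g i)) := by
        refine Finset.sum_congr rfl fun i _ => ?_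
        rw [Finset.smul_sum]
        refine Finset.sum_congr rfl fun k _ => ?_
        rw [smul_smul, ← pow_add]
    _ = ∑ k ∈ Finset.range (n + 1), ∑ i ∈ Finset.range (n + 2),
          (-1 : ℤ) ^ (i + (k + 1)) • a (fmidN k (insN s g i)) := Finset.sum_comm
    _ = ∑ k ∈ Finset.range (n + 1),
          ((∑ i ∈ Finset.range k, (-1 : ℤ) ^ (i + (k + 1)) • a (fmidN k (insN s g i)))
            + ∑ i ∈ Finset.Ico (k + 2) (n + 2),
                (-1 : ℤ) ^ (i + (k + 1)) • a (fmidN k (insN s g i))) := by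
        refine Finset.sum_congr rfl fun k hk => ?_
        rw [Finset.mem_range] at hk
        rw [Finset.range_eq_Ico,
          ← Finset.sum_Ico_consecutive _ (Nat.zero_le (k + 2)) (by omega : k + 2 ≤ n + 2),
          ← Finset.range_eq_Ico, Finset.sum_range_succ, Finset.sum_range_succ]
        have hz : (-1 : ℤ) ^ (k + (k + 1)) • a (fmidN k (insN s g k))
            + (-1 : ℤ) ^ ((k + 1) + (k + 1)) • a (fmidN k (insN s g (k + 1))) = 0 := by
          rw [Leq2 s g k (by omega), Leq1 s g k (by omega), ← add_smul]
          convert zero_smul ℤ _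
          rw [show (k + 1) + (k + 1) = (k + (k + 1)) + 1 from by ring, pow_succ]
          ring
        rw [add_assoc (∑ i ∈ Finset.range k, (-1 : ℤ) ^ (i + (k + 1)) • a (fmidN k (insN s g i))),
          hz, add_zero]
    _ = (∑ k ∈ Finset.range (n + 1),
          ∑ i ∈ Finset.range k, (-1 : ℤ) ^ (i + (k + 1)) • a (fmidN k (insN s g i)))
        + ∑ k ∈ Finset.range (n + 1),
            ∑ i ∈ Finset.Ico (k + 2) (n + 2),
              (-1 : ℤ) ^ (i + (k + 1)) • a (fmidN k (insN s g i)) := Finset.sum_add_distrib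
    _ = (∑ k ∈ Finset.range n,
          ∑ i ∈ Finset.range (k + 1), (-1 : ℤ) ^ (i + k) • a (insN s (fmidN k g) i))
        + ∑ k ∈ Finset.range n,
            ∑ i ∈ Finset.Ico (k + 1) (n + 1),
              (-1 : ℤ) ^ (i + k) • a (insN s (fmidN k g) i) := by
        congr 1
        · rw [Finset.sum_range_succ', Finset.range_zero, Finset.sum_empty, add_zero]
          refine Finset.sum_congr rfl fun k hk => ?_
          rw [Finset.mem_range] at hk
          refine Finset.sum_congr rfl fun i hi => ?_
          rw [Finset.mem_range] at hi
          rw [Lnear s g (k + 1) i (by omega) (by omega), Nat.add_sub_cancel]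
          exact congrArg (· • _) (negpow_congr (by omega))
        · rw [Finset.sum_range_succ, show Finset.Ico (n + 2) (n + 2) = ∅ from Finset.Ico_self _,
            Finset.sum_empty, add_zero]
          refine Finset.sum_congr rfl fun k hk => ?_
          rw [Finset.mem_range] at hk
          have hcongr : ∑ i ∈ Finset.Ico (k + 2) (n + 2),
                (-1 : ℤ) ^ (i + (k + 1)) • a (fmidN k (insN s g i))
              = ∑ i ∈ Finset.Ico (k + 2) (n + 2),
                  (-1 : ℤ) ^ (i + (k + 1)) • a (insN s (fmidN k g) (i - 1)) := by
            refine Finset.sum_congr rfl fun i hi => ?_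
            rw [Finset.mem_Ico] at hi
            rw [Lfar s g k i (by omega) (by omega)]
          rw [hcongr, Finset.sum_Ico_eq_sum_range, Finset.sum_Ico_eq_sum_range,
            show n + 2 - (k + 2) = n + 1 - (k + 1) from by omega]
          refine Finset.sum_congr rfl fun l hl => ?_
          rw [show k + 2 + l - 1 = k + 1 + l from by omega,
            negpow_congr (show (k + 2 + l + (k + 1)) % 2 = (k + 1 + l + k) % 2 from by omega)]
    _ = ∑ k ∈ Finset.range n, ∑ i ∈ Finset.range (n + 1),
          (-1 : ℤ) ^ (i + k) • a (insN s (fmidN k g) i) := by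
        rw [← Finset.sum_add_distrib]
        refine Finset.sum_congr rfl fun k hk => ?_
        rw [Finset.mem_range] at hk
        simp only [Finset.range_eq_Ico]
        exact Finset.sum_Ico_consecutive _ (Nat.zero_le (k + 1)) (by omega : k + 1 ≤ n + 1)


lemma hInh_eq {M : Type} [AddCommGroup M] (s : G) (n : ℕ)
    (a : (Fin (n + 1) → G) → M) (g : Fin n → G) :
    hInh G s n a g = ∑ i ∈ Finset.range (n + 1), ((-1 : ℤ) ^ i) • a (insN s g i) := by
  rw [← Fin.sum_univ_eq_sum_range (fun i => ((-1 : ℤ) ^ i) • a (insN s g i))]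
  unfold hInh
  refine Finset.sum_congr rfl fun i _ => ?_
  congr 1
  apply congrArg
  funext j
  unfold insN
  split_ifs with h1 h2
  · rw [seq_lt g _ (by omega)]
  · rfl
  · rw [seq_lt g _ (by have := j.isLt; omega)]

lemma dInh_eq {M : Type} [AddCommGroup M] [DistribMulAction G M] (m : ℕ)
    (a : (Fin m → G) → M) (c : Fin (m + 1) → G) :
    dInh G m a c = c 0 • a (fd0 c)
      + (∑ k ∈ Finset.range m, ((-1 : ℤ) ^ (k + 1)) • a (fmidN k c))
      + ((-1 : ℤ) ^ (m + 1)) • a (flast c) := by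
  rw [← Fin.sum_univ_eq_sum_range (fun k => ((-1 : ℤ) ^ (k + 1)) • a (fmidN k c))]
  rfl


lemma combine {M : Type} [AddCommGroup M] (S1 S2 S3 D E F X Y : M)
    (h1 : S1 + D = X) (h2 : S2 + E = 0) (h3 : S3 + F = -Y) :
    X - Y = S1 + S2 + S3 + (D + E + F) := by
  have h : S1 + S2 + S3 + (D + E + F) = (S1 + D) + ((S2 + E) + (S3 + F)) := by abel
  rw [h, h1, h2, h3, zero_add, ← sub_eq_add_neg]

end St10

/-- On inhomogeneous cochains, `sa − a = hₛ(da) + d(hₛ(a))` for every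
`a ∈ Cⁿ(G,M)` (the term `d(hₛ(a))` being absent in degree `0`). -/
theorem statement10 (M : Type) [AddCommGroup M] [DistribMulAction G M] (s : G) :
    (∀ (a : (Fin 0 → G) → M) (g : Fin 0 → G),
      sInh G s 0 a g - a g = hInh G s 0 (dInh G 0 a) g) ∧
    (∀ (n : ℕ) (a : (Fin (n + 1) → G) → M) (g : Fin (n + 1) → G),
      sInh G s (n + 1) a g - a g
        = hInh G s (n + 1) (dInh G (n + 1) a) g + dInh G n (hInh G s n a) g) := by
  constructor
  · intro a g
    have e : ∀ x : Fin 0 → G, a x = a g := fun x => congrArg a (funext fun j => j.elim0)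
    simp [sInh, hInh, dInh, Fin.sum_univ_succ, e, sub_eq_add_neg]
  · intro n a g
    simp only [St10.hInh_eq, St10.dInh_eq, smul_add, Finset.sum_add_distrib]
    exact St10.combine _ _ _ _ _ _ _ _ (St10.P1 s g a) (St10.P2 s g a) (St10.P3 s g a)
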